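/- If two distinct cycles in a directed graph share a common vertex, then the graph has uncountably many tail-equivalence classes of infinite paths. -/

import Mathlib

/-- A directed graph: vertices, edges, source and range maps. -/
structure DirGraph where
  V : Type
  E : Type
  s : E → V
  r : E → V

/-- An infinite path in a directed graph. -/
def InfPath (G : DirGraph) : Type :=
  {p : ℕ → G.E // ∀ n, G.r (p n) = G.s (p (n + 1))}

/-- Tail equivalence of infinite paths. -/
def TailEq (G : DirGraph) (p q : InfPath G) : Prop :=
  ∃ m n : ℕ, ∀ k : ℕ, p.1 (n + k) = q.1 (m + k)

/-- A cycle based at the vertex `v`: a nonempty finite path from `v` to `v`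
whose source vertices are pairwise distinct. -/
structure CycleAt (G : DirGraph) (v : G.V) where
  edges : List G.E
  ne : edges ≠ []
  chain : edges.Chain' (fun e f => G.r e = G.s f)
  src : G.s (edges.head ne) = v
  rng : G.r (edges.getLast ne) = v
  nodup : (edges.map G.s).Nodup

namespace Stmt4Aux

variable {G : DirGraph} {v : G.V}

/-- The block corresponding to a boolean: cycle `c` or cycle `d`. -/
def blk (c d : CycleAt G v) (b : Bool) : List G.E := if b then c.edges else d.edges

lemma blk_ne (c d : CycleAt G v) (b : Bool) : blk c d b ≠ [] := by
  cases b <;> simp [blk, c.ne, d.ne]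

lemma blk_len_pos (c d : CycleAt G v) (b : Bool) : 0 < (blk c d b).length :=
  List.length_pos_iff.2 (blk_ne c d b)

lemma blk_chain (c d : CycleAt G v) (b : Bool) :
    (blk c d b).Chain' (fun e f => G.r e = G.s f) := by
  cases b <;> simpa [blk] using (by first | exact c.chain | exact d.chain)

lemma blk_src (c d : CycleAt G v) (b : Bool) :
    G.s ((blk c d b).head (blk_ne c d b)) = v := by
  cases b <;> simp [blk, c.src, d.src]

lemma blk_rng (c d : CycleAt G v) (b : Bool) :
    G.r ((blk c d b).getLast (blk_ne c d b)) = v := by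
  cases b <;> simp [blk, c.rng, d.rng]

lemma blk_nodup (c d : CycleAt G v) (b : Bool) :
    ((blk c d b).map G.s).Nodup := by
  cases b <;> simp [blk, c.nodup, d.nodup]

lemma blk_inj (c d : CycleAt G v) (hne : c.edges ≠ d.edges) {b b' : Bool}
    (h : blk c d b = blk c d b') : b = b' := by
  cases b <;> cases b' <;> simp_all [blk] <;> exact hne h.symm

/-- Source of a block entry is `v` iff the index is `0`. -/
lemma blk_src_iff (c d : CycleAt G v) (b : Bool) {j : ℕ} (hj : j < (blk c d b).length) :
    G.s ((blk c d b)[j]'hj) = v ↔ j = 0 := by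
  constructor
  · intro h
    have h0 : G.s ((blk c d b)[0]'(blk_len_pos c d b)) = v := by
      have := blk_src c d b
      rwa [List.head_eq_getElem] at this
    have hm : ((blk c d b).map G.s)[j]'(by simpa using hj) =
        ((blk c d b).map G.s)[0]'(by simpa using blk_len_pos c d b) := by
      rw [List.getElem_map, List.getElem_map, h, h0]
    exact ((blk_nodup c d b).getElem_inj_iff).1 hm
  · rintro rfl
    have := blk_src c d b
    rwa [List.head_eq_getElem] at this

variable (c d : CycleAt G v)

/-- Partial sums of block lengths determined by a boolean sequence. -/
def S (σ : ℕ → Bool) : ℕ → ℕ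
  | 0 => 0
  | n + 1 => S σ n + (blk c d (σ n)).length

lemma S_lt_succ (σ : ℕ → Bool) (n : ℕ) : S c d σ n < S c d σ (n + 1) := by
  have := blk_len_pos c d (σ n); simp [S]; omega

lemma S_strictMono (σ : ℕ → Bool) : StrictMono (S c d σ) :=
  strictMono_nat_of_lt_succ (S_lt_succ c d σ)

lemma le_S (σ : ℕ → Bool) (n : ℕ) : n ≤ S c d σ n := by
  induction n with
  | zero => simp [S]
  | succ n ih => have := blk_len_pos c d (σ n); simp [S]; omega

/-- The index of the block containing position `n`. -/
def idx (σ : ℕ → Bool) (n : ℕ) : ℕ := Nat.findGreatest (fun i => S c d σ i ≤ n) n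

lemma S_idx_le (σ : ℕ → Bool) (n : ℕ) : S c d σ (idx c d σ n) ≤ n :=
  Nat.findGreatest_spec (P := fun i => S c d σ i ≤ n) (Nat.zero_le n) (by simp [S])

lemma lt_S_idx_succ (σ : ℕ → Bool) (n : ℕ) : n < S c d σ (idx c d σ n + 1) := by
  by_contra h
  push_neg at h
  have h1 : idx c d σ n + 1 ≤ n := le_trans (le_S c d σ _) h
  have h2 : idx c d σ n + 1 ≤ idx c d σ n :=
    Nat.le_findGreatest h1 h
  omega

lemma idx_eq (σ : ℕ → Bool) {n i : ℕ} (h1 : S c d σ i ≤ n) (h2 : n < S c d σ (i + 1)) :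
    idx c d σ n = i := by
  have hle : i ≤ idx c d σ n :=
    Nat.le_findGreatest (le_trans (le_S c d σ i) h1) h1
  by_contra h
  have h3 : i + 1 ≤ idx c d σ n := by omega
  have := (S_strictMono c d σ).monotone h3
  have := S_idx_le c d σ n
  omega

lemma idx_S_add (σ : ℕ → Bool) (i j : ℕ) (hj : j < (blk c d (σ i)).length) :
    idx c d σ (S c d σ i + j) = i :=
  idx_eq c d σ (Nat.le_add_right _ _) (by simp [S]; omega)

/-- A default edge. -/
def e0 : G.E := c.edges.head c.ne

/-- The infinite path determined by a boolean sequence. -/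
def pE (σ : ℕ → Bool) (n : ℕ) : G.E :=
  (blk c d (σ (idx c d σ n))).getD (n - S c d σ (idx c d σ n)) (e0 c)

lemma sub_lt_len (σ : ℕ → Bool) (n : ℕ) :
    n - S c d σ (idx c d σ n) < (blk c d (σ (idx c d σ n))).length := by
  have h1 := S_idx_le c d σ n
  have h2 := lt_S_idx_succ c d σ n
  simp [S] at h2
  omega

lemma pE_eq (σ : ℕ → Bool) (n : ℕ) :
    pE c d σ n = (blk c d (σ (idx c d σ n)))[n - S c d σ (idx c d σ n)]'(sub_lt_len c d σ n) :=
  List.getD_eq_getElem _ _ _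

lemma pE_spec (σ : ℕ → Bool) (i j : ℕ) (hj : j < (blk c d (σ i)).length) :
    pE c d σ (S c d σ i + j) = (blk c d (σ i))[j]'hj := by
  rw [pE_eq]
  have h := idx_S_add c d σ i j hj
  congr 1 <;> simp [h]

lemma exists_decomp (σ : ℕ → Bool) (n : ℕ) :
    ∃ i j, j < (blk c d (σ i)).length ∧ n = S c d σ i + j := by
  refine ⟨idx c d σ n, n - S c d σ (idx c d σ n), sub_lt_len c d σ n, ?_⟩
  have := S_idx_le c d σ n
  omega

/-- The path is a valid infinite path. -/
lemma pE_chain (σ : ℕ → Bool) (n : ℕ) : G.r (pE c d σ n) = G.s (pE c d σ (n + 1)) := by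
  obtain ⟨i, j, hj, rfl⟩ := exists_decomp c d σ n
  by_cases hcase : j + 1 < (blk c d (σ i)).length
  · -- inside a block
    have e1 : pE c d σ (S c d σ i + j) = (blk c d (σ i))[j]'hj := pE_spec c d σ i j hj
    have e2 : pE c d σ (S c d σ i + j + 1) = (blk c d (σ i))[j + 1]'hcase := by
      rw [show S c d σ i + j + 1 = S c d σ i + (j + 1) by omega]
      exact pE_spec c d σ i (j + 1) hcase
    rw [e1, e2]
    have := List.isChain_iff_getElem.1 (blk_chain c d (σ i)) j (by omega)
    simpa [List.get_eq_getElem] using this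
  · -- block boundary
    have hlen : j + 1 = (blk c d (σ i)).length := by omega
    have e1 : pE c d σ (S c d σ i + j) = (blk c d (σ i))[j]'hj := pE_spec c d σ i j hj
    have e2 : pE c d σ (S c d σ i + j + 1) = (blk c d (σ (i + 1)))[0]'(blk_len_pos c d _) := by
      rw [show S c d σ i + j + 1 = S c d σ (i + 1) + 0 by simp [S]; omega]
      exact pE_spec c d σ (i + 1) 0 (blk_len_pos c d _)
    rw [e1, e2]
    have hr : G.r ((blk c d (σ i))[j]'hj) = v := by
      have h' := blk_rng c d (σ i)
      rw [List.getLast_eq_getElem] at h'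
      convert h' using 3
      omega
    have hs : G.s ((blk c d (σ (i + 1)))[0]'(blk_len_pos c d _)) = v := by
      have := blk_src c d (σ (i + 1))
      rwa [List.head_eq_getElem] at this
    rw [hr, hs]

/-- The source of the `n`-th edge is `v` iff `n` is a block start. -/
lemma src_eq_v_iff (σ : ℕ → Bool) (n : ℕ) :
    G.s (pE c d σ n) = v ↔ ∃ i, S c d σ i = n := by
  constructor
  · intro h
    rw [pE_eq] at h
    have := (blk_src_iff c d (σ (idx c d σ n)) (sub_lt_len c d σ n)).1 h
    have h1 := S_idx_le c d σ n
    exact ⟨idx c d σ n, by omega⟩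
  · rintro ⟨i, rfl⟩
    have : pE c d σ (S c d σ i) = (blk c d (σ i))[0]'(blk_len_pos c d _) := by
      rw [show S c d σ i = S c d σ i + 0 by omega]
      exact pE_spec c d σ i 0 (blk_len_pos c d _)
    rw [this]
    exact (blk_src_iff c d (σ i) (blk_len_pos c d _)).2 rfl

/-- If the paths agree from aligned block starts, the block lengths agree. -/
lemma step_len (hne : c.edges ≠ d.edges) (σ τ : ℕ → Bool) (a b : ℕ)
    (h : ∀ k, pE c d σ (S c d σ a + k) = pE c d τ (S c d τ b + k)) :
    (blk c d (σ a)).length = (blk c d (τ b)).length := by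
  rcases lt_trichotomy (blk c d (σ a)).length (blk c d (τ b)).length with hlt | heq | hgt
  · exfalso
    set L := (blk c d (σ a)).length with hL
    have hv : G.s (pE c d σ (S c d σ a + L)) = v := by
      rw [(src_eq_v_iff c d σ _)]
      exact ⟨a + 1, by simp [S, hL]⟩
    rw [h L] at hv
    have hidx : idx c d τ (S c d τ b + L) = b := idx_S_add c d τ b L hlt
    rw [pE_eq] at hv
    have := (blk_src_iff c d (τ (idx c d τ (S c d τ b + L))) (sub_lt_len c d τ _)).1 hv
    rw [hidx] at this
    simp at this
    have := blk_len_pos c d (σ a)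
    omega
  · exact heq
  · exfalso
    set L := (blk c d (τ b)).length with hL
    have hv : G.s (pE c d τ (S c d τ b + L)) = v := by
      rw [(src_eq_v_iff c d τ _)]
      exact ⟨b + 1, by simp [S, hL]⟩
    rw [← h L] at hv
    have hidx : idx c d σ (S c d σ a + L) = a := idx_S_add c d σ a L hgt
    rw [pE_eq] at hv
    have := (blk_src_iff c d (σ (idx c d σ (S c d σ a + L))) (sub_lt_len c d σ _)).1 hv
    rw [hidx] at this
    simp at this
    have := blk_len_pos c d (τ b)
    omega

/-- One alignment step. -/
lemma step (hne : c.edges ≠ d.edges) (σ τ : ℕ → Bool) (a b : ℕ)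
    (h : ∀ k, pE c d σ (S c d σ a + k) = pE c d τ (S c d τ b + k)) :
    σ a = τ b ∧
      ∀ k, pE c d σ (S c d σ (a + 1) + k) = pE c d τ (S c d τ (b + 1) + k) := by
  have hlen := step_len c d hne σ τ a b h
  have hblk : blk c d (σ a) = blk c d (τ b) := by
    apply List.ext_getElem hlen
    intro j hj1 hj2
    have := h j
    rw [pE_spec c d σ a j hj1, pE_spec c d τ b j hj2] at this
    exact this
  refine ⟨blk_inj c d hne hblk, fun k => ?_⟩
  have := h ((blk c d (σ a)).length + k)
  rw [show S c d σ a + ((blk c d (σ a)).length + k) = S c d σ (a + 1) + k by simp [S]; omega,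
    show S c d τ b + ((blk c d (σ a)).length + k) = S c d τ (b + 1) + k by simp [S]; omega] at this
  exact this

/-- Aligned blocks imply the boolean sequences agree up to shift. -/
lemma align (hne : c.edges ≠ d.edges) (σ τ : ℕ → Bool) (a b : ℕ)
    (h : ∀ k, pE c d σ (S c d σ a + k) = pE c d τ (S c d τ b + k)) :
    ∀ j, σ (a + j) = τ (b + j) := by
  have H : ∀ j, ∀ k, pE c d σ (S c d σ (a + j) + k) = pE c d τ (S c d τ (b + j) + k) := by
    intro j
    induction j with
    | zero => simpa using h
    | succ j ih =>
      exact (step c d hne σ τ (a + j) (b + j) ih).2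
  intro j
  exact (step c d hne σ τ (a + j) (b + j) (H j)).1

/-- Recover sequence tail-equivalence from path tail-equivalence. -/
lemma recover (hne : c.edges ≠ d.edges) (σ τ : ℕ → Bool) (m n : ℕ)
    (h : ∀ k, pE c d σ (n + k) = pE c d τ (m + k)) :
    ∃ b a : ℕ, ∀ j, σ (a + j) = τ (b + j) := by
  set a := idx c d σ n + 1 with ha
  have hna : n ≤ S c d σ a := le_of_lt (lt_S_idx_succ c d σ n)
  set t := S c d σ a - n with ht
  have h2 : ∀ k, pE c d σ (S c d σ a + k) = pE c d τ (m + t + k) := by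
    intro k
    have e1 : n + (t + k) = S c d σ a + k := by omega
    have e2 : m + (t + k) = m + t + k := by omega
    have := h (t + k)
    rwa [e1, e2] at this
  have hv : G.s (pE c d τ (m + t)) = v := by
    have := h2 0
    simp only [Nat.add_zero] at this
    rw [← this, src_eq_v_iff]
    exact ⟨a, rfl⟩
  obtain ⟨b, hb⟩ := (src_eq_v_iff c d τ (m + t)).1 hv
  rw [← hb] at h2
  exact ⟨b, a, align c d hne σ τ a b h2⟩

lemma tailEq_equivalence : Equivalence (TailEq G) := by
  constructor
  · exact fun p => ⟨0, 0, fun k => rfl⟩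
  · rintro p q ⟨m, n, h⟩
    exact ⟨n, m, fun k => (h k).symm⟩
  · rintro p q r ⟨m, n, h1⟩ ⟨m', n', h2⟩
    refine ⟨m' + (max m n' - n'), n + (max m n' - m), fun k => ?_⟩
    have e1 : n + (max m n' - m) + k = n + ((max m n' - m) + k) := by omega
    have e2 : m + ((max m n' - m) + k) = max m n' + k := by omega
    have e3 : max m n' + k = n' + ((max m n' - n') + k) := by omega
    have e4 : m' + ((max m n' - n') + k) = m' + (max m n' - n') + k := by omega
    calc p.1 (n + (max m n' - m) + k) = p.1 (n + ((max m n' - m) + k)) := by rw [e1]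
      _ = q.1 (m + ((max m n' - m) + k)) := h1 _
      _ = q.1 (n' + ((max m n' - n') + k)) := by rw [e2, e3]
      _ = r.1 (m' + ((max m n' - n') + k)) := h2 _
      _ = r.1 (m' + (max m n' - n') + k) := by rw [e4]

lemma not_countable_funBool : ¬Countable (ℕ → Bool) := by
  intro h
  obtain ⟨f, hf⟩ := countable_iff_exists_surjective.1 h
  obtain ⟨n, hn⟩ := hf (fun n => !(f n n))
  have := congrFun hn n
  simp at this

end Stmt4Aux

/-- If two distinct cycles share a common base vertex, then the
graph has uncountably many tail-equivalence classes of infinite paths. -/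
theorem stmt4 (G : DirGraph) (v : G.V) (c d : CycleAt G v)
    (hne : c.edges ≠ d.edges) :
    ¬Countable (Quot (TailEq G)) := by
  intro hcount
  classical
  open Stmt4Aux in
  let P : (ℕ → Bool) → InfPath G := fun σ => ⟨pE c d σ, pE_chain c d σ⟩
  let F : (ℕ → Bool) → Quot (TailEq G) := fun σ => Quot.mk _ (P σ)
  have key : ∀ σ τ : ℕ → Bool, F σ = F τ → ∃ b a : ℕ, ∀ j, σ (a + j) = τ (b + j) := by
    intro σ τ h
    have hte : TailEq G (P σ) (P τ) :=
      (Stmt4Aux.tailEq_equivalence.eqvGen_iff).1 (Quot.eq.1 h)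
    obtain ⟨m, n, hmn⟩ := hte
    exact Stmt4Aux.recover c d hne σ τ m n hmn
  haveI fibCount : ∀ q : Quot (TailEq G), Countable {σ : ℕ → Bool // F σ = q} := by
    intro q
    by_cases hq : ∃ τ0 : ℕ → Bool, F τ0 = q
    · obtain ⟨τ0, hτ0⟩ := hq
      have spec : ∀ σ : {σ : ℕ → Bool // F σ = q},
          ∃ p : ℕ × ℕ, ∀ j, σ.1 (p.2 + j) = τ0 (p.1 + j) := by
        intro σ
        obtain ⟨b, a, h⟩ := key σ.1 τ0 (σ.2.trans hτ0.symm)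
        exact ⟨(b, a), h⟩
      let w : {σ : ℕ → Bool // F σ = q} → ℕ × ℕ := fun σ => (spec σ).choose
      have hw : ∀ σ, ∀ j, σ.1 ((w σ).2 + j) = τ0 ((w σ).1 + j) :=
        fun σ => (spec σ).choose_spec
      let g : {σ : ℕ → Bool // F σ = q} → ℕ × ℕ × List Bool := fun σ =>
        ⟨(w σ).1, (w σ).2, List.ofFn (fun i : Fin (w σ).2 => σ.1 i)⟩
      have hg : Function.Injective g := by
        intro σ1 σ2 heq
        have h1 : (w σ1).1 = (w σ2).1 := congrArg (fun x => x.1) heq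
        have h2 : (w σ1).2 = (w σ2).2 := congrArg (fun x => x.2.1) heq
        have h3 : List.ofFn (fun i : Fin (w σ1).2 => σ1.1 i) =
            List.ofFn (fun i : Fin (w σ2).2 => σ2.1 i) := congrArg (fun x => x.2.2) heq
        apply Subtype.ext
        funext j
        by_cases hj : j < (w σ1).2
        · have e1 : σ1.1 j = (List.ofFn (fun i : Fin (w σ1).2 => σ1.1 i))[j]'(by
              simpa using hj) := by
            simp
          have e2 : σ2.1 j = (List.ofFn (fun i : Fin (w σ2).2 => σ2.1 i))[j]'(by
              simp; omega) := by
            simp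
          rw [e1, e2]
          exact List.getElem_of_eq h3 _
        · have e : (w σ1).2 + (j - (w σ1).2) = j := by omega
          have s1 := hw σ1 (j - (w σ1).2)
          have s2 := hw σ2 (j - (w σ1).2)
          rw [e] at s1
          rw [← h1, ← h2, e] at s2
          rw [s1, s2]
      exact hg.countable
    · exact @Subsingleton.to_countable _ ⟨fun σ1 σ2 => absurd ⟨σ1.1, σ1.2⟩ hq⟩
  have : Countable (ℕ → Bool) :=
    Countable.of_equiv _ (Equiv.sigmaFiberEquiv F)
  exact Stmt4Aux.not_countable_funBool this
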